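/- Let A be a finite set and let f be a symmetric natural-number-valued function on pairs of distinct elements of A. Then there exist a natural number k, a finite set U, and an injective map ψ from A to subsets of U such that: |ψ(x)| = k for every x ∈ A; |ψ(x) ∩ ψ(y)| = f(x,y) for all distinct x, y ∈ A; and every element of U belongs to at most two of the sets ψ(x) (equivalently, ψ(x) ∩ ψ(y) ∩ ψ(z) = ∅ for any three distinct x, y, z). -/

import Mathlib

open Finset

namespace SVR

variable (n m : ℕ)

abbrev U := (Fin n × Fin n × Fin (m+1)) ⊕ (Fin n × Fin (m+1))

def fo (i : ℕ) : Fin (m+1) := ⟨i % (m+1), Nat.mod_lt _ (Nat.succ_pos m)⟩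

lemma fo_inj {m i j : ℕ} (hi : i < m+1) (hj : j < m+1) (h : fo m i = fo m j) : i = j := by
  have := congrArg Fin.val h
  simpa [fo, Nat.mod_eq_of_lt hi, Nat.mod_eq_of_lt hj] using this

def pe (a b : Fin n) (i : ℕ) : U n m := Sum.inl (min a b, max a b, fo m i)

def pv (a : Fin n) (i : ℕ) : U n m := Sum.inr (a, fo m i)

lemma pe_comm (a b : Fin n) (i : ℕ) : pe n m a b i = pe n m b a i := by
  simp [pe, min_comm, max_comm]

lemma pair_eq {α : Type*} [LinearOrder α] {a b c d : α}
    (h1 : min a b = min c d) (h2 : max a b = max c d) :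
    (a = c ∧ b = d) ∨ (a = d ∧ b = c) := by
  rcases le_total a b with h | h <;> rcases le_total c d with h' | h'
  · rw [min_eq_left h, min_eq_left h'] at h1
    rw [max_eq_right h, max_eq_right h'] at h2
    exact Or.inl ⟨h1, h2⟩
  · rw [min_eq_left h, min_eq_right h'] at h1
    rw [max_eq_right h, max_eq_left h'] at h2
    exact Or.inr ⟨h1, h2⟩
  · rw [min_eq_right h, min_eq_left h'] at h1
    rw [max_eq_left h, max_eq_right h'] at h2
    exact Or.inr ⟨h2, h1⟩
  · rw [min_eq_right h, min_eq_right h'] at h1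
    rw [max_eq_left h, max_eq_left h'] at h2
    exact Or.inl ⟨h2, h1⟩

lemma pe_eq {a b c d : Fin n} {i j : ℕ}
    (h : pe n m a b i = pe n m c d j) :
    ((a = c ∧ b = d) ∨ (a = d ∧ b = c)) ∧ fo m i = fo m j := by
  simp only [pe, Sum.inl.injEq, Prod.mk.injEq] at h
  exact ⟨pair_eq h.1 h.2.1, h.2.2⟩

variable (g : Fin n → Fin n → ℕ)

def S (a : Fin n) : ℕ := ∑ b ∈ univ.filter (· ≠ a), g a b

def shared (a : Fin n) : Finset (U n m) :=
  (univ.filter (· ≠ a)).biUnion (fun b => (range (g a b)).image (pe n m a b))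

def priv' (a : Fin n) : Finset (U n m) :=
  (range (m + 1 - S n g a)).image (pv n m a)

def psi (a : Fin n) : Finset (U n m) := shared n m g a ∪ priv' n m g a

variable {n m g}

lemma g_le_S {a b : Fin n} (hb : b ≠ a) : g a b ≤ S n g a :=
  Finset.single_le_sum (fun _ _ => Nat.zero_le _) (by simp [hb])

variable (hm : ∀ a, S n g a ≤ m)

include hm

lemma card_shared (a : Fin n) : (shared n m g a).card = S n g a := by
  rw [shared, Finset.card_biUnion]
  · refine Finset.sum_congr rfl fun b hb => ?_
    simp only [mem_filter] at hb
    rw [Finset.card_image_of_injOn, Finset.card_range]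
    intro i hi j hj hij
    simp only [mem_coe, mem_range] at hi hj
    have hgb : g a b ≤ m + 1 := le_trans (g_le_S hb.2) (Nat.le_succ_of_le (hm a))
    exact fo_inj (lt_of_lt_of_le hi hgb) (lt_of_lt_of_le hj hgb) (pe_eq n m hij).2
  · intro b hb c hc hbc
    simp only [mem_coe, mem_filter] at hb hc
    rw [Function.onFun, Finset.disjoint_left]
    rintro u hu hu'
    simp only [mem_image, mem_range] at hu hu'
    obtain ⟨i, hi, rfl⟩ := hu
    obtain ⟨j, hj, hj'⟩ := hu'
    rcases (pe_eq n m hj'.symm).1 with ⟨h1, h2⟩ | ⟨h1, h2⟩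
    · exact hbc h2
    · exact hb.2 h2

omit hm in
lemma card_priv (a : Fin n) : (priv' n m g a).card = m + 1 - S n g a := by
  rw [priv', Finset.card_image_of_injOn, Finset.card_range]
  intro i hi j hj hij
  simp only [mem_coe, mem_range] at hi hj
  have : fo m i = fo m j := by simpa [pv, Sum.inr.injEq, Prod.mk.injEq] using hij
  exact fo_inj (lt_of_lt_of_le hi (Nat.sub_le _ _)) (lt_of_lt_of_le hj (Nat.sub_le _ _)) this

lemma card_psi (a : Fin n) : (psi n m g a).card = m + 1 := by
  rw [psi, Finset.card_union_of_disjoint, card_shared hm, card_priv]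
  · have := hm a; omega
  · rw [Finset.disjoint_left]
    rintro u hu hu'
    simp only [shared, priv', mem_biUnion, mem_image, mem_range, mem_filter] at hu hu'
    obtain ⟨b, _, i, _, rfl⟩ := hu
    obtain ⟨j, _, h⟩ := hu'
    exact absurd h (by simp [pe, pv])
  
omit hm

variable (hg : ∀ a b : Fin n, a ≠ b → g a b = g b a)

include hg

lemma inter_psi {a b : Fin n} (hab : a ≠ b) :
    psi n m g a ∩ psi n m g b = (range (g a b)).image (pe n m a b) := by
  ext u
  simp only [mem_inter, psi, mem_union, shared, priv', mem_biUnion, mem_image, mem_range,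
    mem_filter, mem_univ, true_and]
  constructor
  · rintro ⟨ha, hb⟩
    rcases ha with ⟨c, hc, i, hi, rfl⟩ | ⟨i, hi, rfl⟩
    · rcases hb with ⟨d, hd, j, hj, hj'⟩ | ⟨j, hj, hj'⟩
      · rcases (pe_eq n m hj'.symm).1 with ⟨h1, h2⟩ | ⟨h1, h2⟩
        · exact absurd h1 hab
        · obtain rfl : c = b := h2
          exact ⟨i, hi, rfl⟩
      · exact absurd hj' (by simp [pe, pv])
    · rcases hb with ⟨d, hd, j, hj, hj'⟩ | ⟨j, hj, hj'⟩
      · exact absurd hj' (by simp [pe, pv])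
      · simp only [pv, Sum.inr.injEq, Prod.mk.injEq] at hj'
        exact absurd hj'.1 hab.symm
  · rintro ⟨i, hi, rfl⟩
    refine ⟨Or.inl ⟨b, hab.symm, i, hi, rfl⟩,
      Or.inl ⟨a, hab, i, ?_, (pe_comm n m a b i).symm ▸ rfl⟩⟩
    rwa [hg b a hab.symm]

lemma card_inter (hm : ∀ a, S n g a ≤ m) {a b : Fin n} (hab : a ≠ b) :
    (psi n m g a ∩ psi n m g b).card = g a b := by
  rw [inter_psi hg hab, Finset.card_image_of_injOn, Finset.card_range]
  intro i hi j hj hij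
  simp only [mem_coe, mem_range] at hi hj
  have hgb : g a b ≤ m + 1 := le_trans (g_le_S hab.symm) (Nat.le_succ_of_le (hm a))
  exact fo_inj (lt_of_lt_of_le hi hgb) (lt_of_lt_of_le hj hgb) (pe_eq n m hij).2

lemma triple_psi {a b c : Fin n} (hab : a ≠ b) (hbc : b ≠ c) (hac : a ≠ c) :
    psi n m g a ∩ psi n m g b ∩ psi n m g c = ∅ := by
  rw [Finset.eq_empty_iff_forall_notMem]
  intro u hu
  rw [mem_inter, mem_inter] at hu
  have h1 : u ∈ psi n m g a ∩ psi n m g b := mem_inter.2 ⟨hu.1.1, hu.1.2⟩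
  have h2 : u ∈ psi n m g b ∩ psi n m g c := mem_inter.2 ⟨hu.1.2, hu.2⟩
  rw [inter_psi hg hab] at h1
  rw [inter_psi hg hbc] at h2
  simp only [mem_image, mem_range] at h1 h2
  obtain ⟨i, hi, rfl⟩ := h1
  obtain ⟨j, hj, hj'⟩ := h2
  rcases (pe_eq n m hj'.symm).1 with ⟨h1, h2⟩ | ⟨h1, h2⟩
  · exact hab h1
  · exact hac h1

omit hg

lemma psi_inj (hm : ∀ a, S n g a ≤ m) : Function.Injective (psi n m g) := by
  intro a b hab
  by_contra hne
  have h0 : pv n m a 0 ∈ psi n m g a := by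
    simp only [psi, priv', mem_union, mem_image, mem_range]
    exact Or.inr ⟨0, by have := hm a; omega, rfl⟩
  rw [hab] at h0
  simp only [psi, shared, priv', mem_union, mem_biUnion, mem_image, mem_range, mem_filter,
    mem_univ, true_and] at h0
  rcases h0 with ⟨c, hc, i, hi, h⟩ | ⟨j, hj, h⟩
  · exact absurd h (by simp [pe, pv])
  · simp only [pv, Sum.inr.injEq, Prod.mk.injEq] at h
    exact hne h.1.symm

end SVR




/-- Let `A` be a finite set and `f` a symmetric `ℕ`-valued function on pairs of distinct
elements of `A`. Then there exist `k : ℕ`, a finite set `U` and an injective map `ψ`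
from `A` to subsets of `U` such that `|ψ x| = k` for every `x`, `|ψ x ∩ ψ y| = f x y`
for all distinct `x, y`, and every element of `U` belongs to at most two of the sets
`ψ x` (equivalently, any three of the sets have empty common intersection). -/
theorem set_valued_representation {A : Type*} [Fintype A] (f : A → A → ℕ)
    (hf : ∀ x y : A, x ≠ y → f x y = f y x) :
    ∃ (k : ℕ) (U : Type) (_ : Fintype U) (_ : DecidableEq U) (ψ : A → Finset U),
      Function.Injective ψ ∧
      (∀ x, (ψ x).card = k) ∧
      (∀ x y : A, x ≠ y → (ψ x ∩ ψ y).card = f x y) ∧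
      (∀ x y z : A, x ≠ y → y ≠ z → x ≠ z → ψ x ∩ ψ y ∩ ψ z = ∅) := by
  classical
  set n := Fintype.card A with hn
  let e : A ≃ Fin n := Fintype.equivFin A
  let g : Fin n → Fin n → ℕ := fun a b => f (e.symm a) (e.symm b)
  have hg : ∀ a b : Fin n, a ≠ b → g a b = g b a := fun a b hab =>
    hf _ _ (fun h => hab (e.symm.injective h))
  let m : ℕ := Finset.univ.sup (SVR.S n g)
  have hm : ∀ a, SVR.S n g a ≤ m := fun a => Finset.le_sup (Finset.mem_univ a)
  have heinj : Function.Injective e := e.injective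
  refine ⟨m + 1, SVR.U n m, inferInstance, inferInstance, fun x => SVR.psi n m g (e x),
    fun x y h => heinj (SVR.psi_inj hm h), fun x => SVR.card_psi hm _, ?_, ?_⟩
  · intro x y hxy
    have : (e x) ≠ (e y) := fun h => hxy (heinj h)
    rw [SVR.card_inter hg hm this]
    simp [g, e.symm_apply_apply]
  · intro x y z hxy hyz hxz
    exact SVR.triple_psi hg (fun h => hxy (heinj h)) (fun h => hyz (heinj h))
      (fun h => hxz (heinj h))
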